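/- Define S_T^{(i)} := Σ_{k=0}^{T−1} X_k θ_{i,k} for i = 1, 2. Assume that for some α > 0, P[θ_2 > x θ_1] = o((log x)^{-3-α}) as x → ∞, where (θ_1, θ_2) is distributed as any (θ_{1,k}, θ_{2,k}) in the IID environment. Then for every fixed ε > 0, P[S_T^{(2)} > n^{ε} S_T^{(1)}; T ≤ (log n)^{2+α}] = o(1/log n) as n → ∞. -/

import Mathlib

open MeasureTheory ProbabilityTheory Filter Real Set Asymptotics
open scoped Topology ENNReal

private lemma measurable_tsum_of_nonneg {α : Type*} [MeasurableSpace α] {ι : Type*} [Countable ι]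
    (f : ι → α → ℝ) (hf : ∀ i, Measurable (f i)) (h0 : ∀ i a, 0 ≤ f i a) :
    Measurable fun a => ∑' i, f i a := by
  have heq : (fun a => ∑' i, f i a) = fun a => (∑' i, ENNReal.ofReal (f i a)).toReal := by
    funext a
    by_cases h : Summable fun i => f i a
    · rw [← ENNReal.ofReal_tsum_of_nonneg (fun i => h0 i a) h,
        ENNReal.toReal_ofReal (tsum_nonneg fun i => h0 i a)]
    · rw [tsum_eq_zero_of_not_summable h]
      have htop : ∑' i, ENNReal.ofReal (f i a) = ∞ := by
        by_contra hne
        exact h ((ENNReal.summable_toReal hne).congr fun i =>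
          ENNReal.toReal_ofReal (h0 i a))
      rw [htop]; simp
  rw [heq]
  exact (Measurable.ennreal_tsum fun i => ENNReal.measurable_ofReal.comp (hf i)).ennreal_toReal

/-- **Lemma 2, second part.** In the IID-environment setting, let
`S_T^{(i)} := Σ_{k<T} X_k θ_{i,k}` for `i = 1,2`. If for some `α > 0`
`P[θ₂ > x θ₁] = o((log x)^{-3-α})` as `x → ∞`, then for every fixed `ε > 0`,
`P[S_T^{(2)} > n^ε S_T^{(1)}; T ≤ (log n)^{2+α}] = o(1/log n) as n → ∞`. -/
theorem weighted_total_progeny_second_moment_event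
    {Ω : Type*} [MeasurableSpace Ω] (μ : Measure Ω) [IsProbabilityMeasure μ]
    {E : Type*} [MeasurableSpace E]
    -- IID environment
    (e : ℕ → Ω → E) (hemeas : ∀ n, Measurable (e n))
    (hiid : iIndepFun e μ)
    (hident : ∀ n, μ.map (e n) = μ.map (e 0))
    -- conditional offspring distribution of type-1 particles and its moments
    (p : E → ℕ × ℕ → ℝ) (hp0 : ∀ a ij, 0 ≤ p a ij) (hp1 : ∀ a, (∑' ij : ℕ × ℕ, p a ij) = 1)
    (hpmeas : ∀ ij, Measurable fun a => p a ij)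
    (Θ1 Θ2 : E → ℝ)
    (hΘ1 : ∀ a, Θ1 a = ∑' ij : ℕ × ℕ, (ij.2 : ℝ) * p a ij)
    (hΘ2 : ∀ a, Θ2 a = ∑' ij : ℕ × ℕ, (ij.2 : ℝ) * ((ij.2 : ℝ) - 1) * p a ij)
    -- the type-1 population process
    (X : ℕ → Ω → ℕ) (hXmeas : ∀ n, Measurable (X n)) (hX0 : ∀ ω, X 0 ω = 1)
    (T : Ω → ℕ) (hT : ∀ ω, T ω = sInf {n | X n ω = 0})
    (S1 : Ω → ℝ) (hS1 : ∀ ω, S1 ω = ∑ k ∈ Finset.range (T ω), (X k ω : ℝ) * Θ1 (e k ω))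
    (S2 : Ω → ℝ) (hS2 : ∀ ω, S2 ω = ∑ k ∈ Finset.range (T ω), (X k ω : ℝ) * Θ2 (e k ω))
    -- tail condition on `θ₂/θ₁`, for some `α > 0`
    (α : ℝ) (hα : 0 < α)
    (hlambda : (fun x : ℝ => (μ {ω | x * Θ1 (e 0 ω) < Θ2 (e 0 ω)}).toReal)
      =o[atTop] fun x : ℝ => Real.log x ^ (-(3 + α)))
    (ε : ℝ) (hε : 0 < ε) :
    (fun n : ℕ =>
        (μ {ω | (n : ℝ) ^ ε * S1 ω < S2 ω ∧ (T ω : ℝ) ≤ Real.log n ^ (2 + α)}).toReal)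
      =o[atTop] fun n : ℕ => (Real.log n)⁻¹ := by
  classical
  -- measurability of Θ1, Θ2
  have hΘ1m : Measurable Θ1 := by
    have h1 : Θ1 = fun a => ∑' ij : ℕ × ℕ, (ij.2 : ℝ) * p a ij := funext hΘ1
    rw [h1]
    exact measurable_tsum_of_nonneg _ (fun ij => (hpmeas ij).const_mul _)
      (fun ij a => mul_nonneg (Nat.cast_nonneg _) (hp0 a ij))
  have hΘ2m : Measurable Θ2 := by
    have h1 : Θ2 = fun a => ∑' ij : ℕ × ℕ, (ij.2 : ℝ) * ((ij.2 : ℝ) - 1) * p a ij := funext hΘ2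
    rw [h1]
    refine measurable_tsum_of_nonneg _ (fun ij => (hpmeas ij).const_mul _) (fun ij a => ?_)
    rcases Nat.eq_zero_or_pos ij.2 with h | h
    · simp [h]
    · have : (1 : ℝ) ≤ (ij.2 : ℝ) := by exact_mod_cast h
      have := mul_nonneg (mul_nonneg (by linarith : (0:ℝ) ≤ (ij.2 : ℝ)) (by linarith : (0:ℝ) ≤ (ij.2 : ℝ) - 1)) (hp0 a ij)
      linarith [this]
  -- the `bad` set in the environment space and identical distribution
  have hBm : ∀ x : ℝ, MeasurableSet {a : E | x * Θ1 a < Θ2 a} := fun x =>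
    measurableSet_lt (hΘ1m.const_mul x) hΘ2m
  have hAeq : ∀ (x : ℝ) (k : ℕ),
      μ {ω | x * Θ1 (e k ω) < Θ2 (e k ω)} = μ {ω | x * Θ1 (e 0 ω) < Θ2 (e 0 ω)} := by
    intro x k
    have h1 : {ω | x * Θ1 (e k ω) < Θ2 (e k ω)} = e k ⁻¹' {a | x * Θ1 a < Θ2 a} := rfl
    have h2 : {ω | x * Θ1 (e 0 ω) < Θ2 (e 0 ω)} = e 0 ⁻¹' {a | x * Θ1 a < Θ2 a} := rfl
    rw [h1, h2, ← Measure.map_apply (hemeas k) (hBm x),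
      ← Measure.map_apply (hemeas 0) (hBm x), hident k]
  set m : ℕ → ℕ := fun n => ⌊Real.log n ^ (2 + α)⌋₊ + 1 with hmdef
  -- inclusion into a finite union of `bad generation` events
  have hincl : ∀ n : ℕ,
      {ω | (n : ℝ) ^ ε * S1 ω < S2 ω ∧ (T ω : ℝ) ≤ Real.log n ^ (2 + α)} ⊆
        ⋃ k ∈ Finset.range (m n), {ω | (n : ℝ) ^ ε * Θ1 (e k ω) < Θ2 (e k ω)} := by
    intro n ω hω
    obtain ⟨h1, h2⟩ := hω
    by_contra hcon
    simp only [mem_iUnion, Finset.mem_range, not_exists, mem_setOf_eq, not_lt,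
      exists_prop, not_and] at hcon
    have hTm : T ω < m n := Nat.lt_succ_of_le (Nat.le_floor h2)
    have hle : S2 ω ≤ (n : ℝ) ^ ε * S1 ω := by
      rw [hS1, hS2, Finset.mul_sum]
      refine Finset.sum_le_sum fun k hk => ?_
      have hk' : k < m n := lt_trans (Finset.mem_range.mp hk) hTm
      calc (X k ω : ℝ) * Θ2 (e k ω)
          ≤ (X k ω : ℝ) * ((n : ℝ) ^ ε * Θ1 (e k ω)) :=
            mul_le_mul_of_nonneg_left (hcon k hk') (Nat.cast_nonneg _)
        _ = (n : ℝ) ^ ε * ((X k ω : ℝ) * Θ1 (e k ω)) := by ring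
    exact absurd h1 (not_lt.mpr hle)
  -- union bound
  have hbound : ∀ n : ℕ,
      (μ {ω | (n : ℝ) ^ ε * S1 ω < S2 ω ∧ (T ω : ℝ) ≤ Real.log n ^ (2 + α)}).toReal ≤
        (m n : ℝ) * (μ {ω | (n : ℝ) ^ ε * Θ1 (e 0 ω) < Θ2 (e 0 ω)}).toReal := by
    intro n
    have h1 : μ {ω | (n : ℝ) ^ ε * S1 ω < S2 ω ∧ (T ω : ℝ) ≤ Real.log n ^ (2 + α)} ≤
        (m n : ℝ≥0∞) * μ {ω | (n : ℝ) ^ ε * Θ1 (e 0 ω) < Θ2 (e 0 ω)} := by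
      calc μ {ω | (n : ℝ) ^ ε * S1 ω < S2 ω ∧ (T ω : ℝ) ≤ Real.log n ^ (2 + α)}
          ≤ μ (⋃ k ∈ Finset.range (m n), {ω | (n : ℝ) ^ ε * Θ1 (e k ω) < Θ2 (e k ω)}) :=
            measure_mono (hincl n)
        _ ≤ ∑ k ∈ Finset.range (m n), μ {ω | (n : ℝ) ^ ε * Θ1 (e k ω) < Θ2 (e k ω)} :=
            measure_biUnion_finset_le _ _
        _ = ∑ k ∈ Finset.range (m n), μ {ω | (n : ℝ) ^ ε * Θ1 (e 0 ω) < Θ2 (e 0 ω)} :=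
            Finset.sum_congr rfl fun k _ => hAeq _ k
        _ = (m n : ℝ≥0∞) * μ {ω | (n : ℝ) ^ ε * Θ1 (e 0 ω) < Θ2 (e 0 ω)} := by
            rw [Finset.sum_const, Finset.card_range, nsmul_eq_mul]
    have hfin : (m n : ℝ≥0∞) * μ {ω | (n : ℝ) ^ ε * Θ1 (e 0 ω) < Θ2 (e 0 ω)} ≠ ∞ :=
      ENNReal.mul_ne_top (ENNReal.natCast_ne_top _) (measure_ne_top μ _)
    calc (μ {ω | (n : ℝ) ^ ε * S1 ω < S2 ω ∧ (T ω : ℝ) ≤ Real.log n ^ (2 + α)}).toReal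
        ≤ ((m n : ℝ≥0∞) * μ {ω | (n : ℝ) ^ ε * Θ1 (e 0 ω) < Θ2 (e 0 ω)}).toReal :=
          ENNReal.toReal_mono hfin h1
      _ = (m n : ℝ) * (μ {ω | (n : ℝ) ^ ε * Θ1 (e 0 ω) < Θ2 (e 0 ω)}).toReal := by
          simp [ENNReal.toReal_mul]
  -- Big-O reduction to the product bound
  have hO : (fun n : ℕ =>
        (μ {ω | (n : ℝ) ^ ε * S1 ω < S2 ω ∧ (T ω : ℝ) ≤ Real.log n ^ (2 + α)}).toReal)
      =O[atTop] fun n : ℕ =>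
        (m n : ℝ) * (μ {ω | (n : ℝ) ^ ε * Θ1 (e 0 ω) < Θ2 (e 0 ω)}).toReal := by
    refine Asymptotics.IsBigO.of_bound 1 (Eventually.of_forall fun n => ?_)
    simp only [Real.norm_eq_abs]
    rw [one_mul, abs_of_nonneg ENNReal.toReal_nonneg,
      abs_of_nonneg (mul_nonneg (Nat.cast_nonneg _) ENNReal.toReal_nonneg)]
    exact hbound n
  -- little-o of the tail probability along n^ε
  have hcomp : Tendsto (fun n : ℕ => (n : ℝ) ^ ε) atTop atTop :=
    (tendsto_rpow_atTop hε).comp tendsto_natCast_atTop_atTop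
  have hg := hlambda.comp_tendsto hcomp
  -- Big-O for m n
  have hmO : (fun n : ℕ => (m n : ℝ)) =O[atTop] fun n : ℕ => Real.log n ^ (2 + α) := by
    refine Asymptotics.IsBigO.of_bound 2 ?_
    filter_upwards [eventually_ge_atTop 3] with n hn
    have hn3 : (3 : ℝ) ≤ (n : ℝ) := by exact_mod_cast hn
    have hnpos : (0 : ℝ) < n := by linarith
    have hlog : 1 ≤ Real.log n := by
      rw [Real.le_log_iff_exp_le hnpos]
      calc Real.exp 1 ≤ 2.7182818286 := Real.exp_one_lt_d9.le
        _ ≤ (3 : ℝ) := by norm_num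
        _ ≤ (n : ℝ) := hn3
    have h1 : (1 : ℝ) ≤ Real.log n ^ (2 + α) := Real.one_le_rpow hlog (by linarith)
    have hmn : (m n : ℝ) ≤ Real.log n ^ (2 + α) + 1 := by
      have hfl := Nat.floor_le (by positivity : (0 : ℝ) ≤ Real.log n ^ (2 + α))
      simp only [hmdef]
      push_cast
      linarith
    simp only [Real.norm_eq_abs]
    rw [abs_of_nonneg (by positivity : (0:ℝ) ≤ (m n : ℝ)), abs_of_nonneg (by positivity)]
    linarith
  have hprod := hmO.mul_isLittleO hg
  -- the deterministic comparison of the product bound with (log n)⁻¹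
  have hfin : (fun n : ℕ => Real.log n ^ (2 + α) * Real.log ((n : ℝ) ^ ε) ^ (-(3 + α)))
      =O[atTop] fun n : ℕ => (Real.log n)⁻¹ := by
    refine Asymptotics.IsBigO.of_bound (ε ^ (-(3 + α))) ?_
    filter_upwards [eventually_ge_atTop 3] with n hn
    have hn3 : (3 : ℝ) ≤ (n : ℝ) := by exact_mod_cast hn
    have hnpos : (0 : ℝ) < n := by linarith
    have hlog : 1 ≤ Real.log n := by
      rw [Real.le_log_iff_exp_le hnpos]
      calc Real.exp 1 ≤ 2.7182818286 := Real.exp_one_lt_d9.le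
        _ ≤ (3 : ℝ) := by norm_num
        _ ≤ (n : ℝ) := hn3
    have hlogpos : 0 < Real.log n := by linarith
    have hrw : Real.log ((n : ℝ) ^ ε) = ε * Real.log n := Real.log_rpow hnpos ε
    rw [hrw, Real.mul_rpow hε.le hlogpos.le]
    have hkey : Real.log n ^ (2 + α) * Real.log n ^ (-(3 + α)) = (Real.log n)⁻¹ := by
      rw [← Real.rpow_add hlogpos]
      have he : (2 + α) + (-(3 + α)) = -1 := by ring
      rw [he, Real.rpow_neg_one]
    have heq : Real.log n ^ (2 + α) * (ε ^ (-(3 + α)) * Real.log n ^ (-(3 + α)))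
        = ε ^ (-(3 + α)) * (Real.log n)⁻¹ := by
      rw [← hkey]; ring
    simp only [Real.norm_eq_abs]
    rw [abs_of_nonneg (by positivity), abs_of_nonneg (by positivity), heq]
  exact hO.trans_isLittleO (hprod.trans_isBigO hfin)
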